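/- Fix γ ∈ (0,1) and μ > 0. Let g be a concave traveling wave with speed v, support [L,0] and phenotypic threshold s. Then g(0) = g(L) = 0, sup_{x∈ℝ} g(x) = γ, and g(x) = Φ_s[g](x + v) for all x ∈ [L, 0]. -/

import Mathlib

/-- `π(x) = x` if `x ≥ 0`, and `−∞` otherwise. -/
noncomputable def piE (x : EReal) : EReal := if 0 ≤ x then x else ⊥

/-- Concavity for `ℝ ∪ {−∞}`-valued functions (modeled as `ℝ → EReal`). -/
def ConcaveE (h : ℝ → EReal) : Prop :=
  ∀ x x' t : ℝ, 0 ≤ t → t ≤ 1 →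
    ((t : EReal) * h x + ((1 - t : ℝ) : EReal) * h x') ≤ h (t * x + (1 - t) * x')

/-- `Φ_ξ[g](x) = 1 − γ + sup_y ( g(y) − |x − y| ) − μ·max(ξ − x, 0)`. -/
noncomputable def Phi (γ μ : ℝ) (g : ℝ → EReal) (ξ x : ℝ) : EReal :=
  ((1 - γ : ℝ) : EReal) + (⨆ y : ℝ, g y - ((|x - y| : ℝ) : EReal))
    - ((μ * max (ξ - x) 0 : ℝ) : EReal)

/-- The phenotypic threshold `s = sup{ ξ ∈ ℝ : sup_x Φ_ξ[g](x) ≥ γ }`. -/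
noncomputable def sNext (γ μ : ℝ) (g : ℝ → EReal) : ℝ :=
  sSup {ξ : ℝ | (γ : EReal) ≤ ⨆ x : ℝ, Phi γ μ g ξ x}

/-- The deterministic dynamic: `g_n = π ∘ Φ_{s_n}[g_{n−1}]` with
`s_n = sNext γ μ g_{n−1}`. -/
noncomputable def gIter (γ μ : ℝ) (g0 : ℝ → EReal) : ℕ → ℝ → EReal
  | 0 => g0
  | n + 1 => fun x =>
      piE (Phi γ μ (gIter γ μ g0 n) (sNext γ μ (gIter γ μ g0 n)) x)

/-- A concave `g` with `sup{x : g x > 0} = 0`, `L = inf{x : g x > 0} > −∞`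
(and `g = −∞` outside `[L,0]`) is a traveling wave with speed `v` if the
dynamic has the effect of shifting `g` by `v` at every step. -/
def IsTravelingWave (γ μ : ℝ) (g : ℝ → EReal) (v L : ℝ) : Prop :=
  ConcaveE g ∧
  {x : ℝ | 0 < g x}.Nonempty ∧
  BddBelow {x : ℝ | 0 < g x} ∧
  sSup {x : ℝ | 0 < g x} = 0 ∧
  sInf {x : ℝ | 0 < g x} = L ∧
  (∀ x : ℝ, x ∉ Set.Icc L 0 → g x = ⊥) ∧
  (∀ n : ℕ, 1 ≤ n → ∀ x : ℝ, gIter γ μ g n x = g (x - n * v))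

section TWHelpers

lemma piE_coe' (r : ℝ) : piE (r : EReal) = if 0 ≤ r then (r : EReal) else ⊥ := by
  unfold piE
  by_cases h : 0 ≤ r
  · rw [if_pos h, if_pos (by exact_mod_cast h)]
  · rw [if_neg h, if_neg (by exact_mod_cast h)]

lemma piE_le' (x : EReal) : piE x ≤ x := by
  unfold piE; split <;> simp

lemma ereal_sub_sub' (a : EReal) (b c : ℝ) : a - (b:EReal) - (c:EReal) = a - ((b+c:ℝ):EReal) := by
  rw [sub_eq_add_neg, sub_eq_add_neg, sub_eq_add_neg, add_assoc, ← EReal.coe_neg, ← EReal.coe_neg,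
    ← EReal.coe_neg, ← EReal.coe_add]
  ring_nf

lemma ereal_sub_ne_bot' (a : EReal) (b : ℝ) (h : a ≠ ⊥) : a - (b:EReal) ≠ ⊥ := by
  induction a using EReal.rec with
  | bot => simp at h
  | coe r => simp [← EReal.coe_sub]
  | top => simp [EReal.top_sub_coe]

lemma ereal_sub_coe_le' (a : EReal) (b c : ℝ) (h : a ≤ ↑c) : a - (b:EReal) ≤ ↑(c - b) := by
  rw [EReal.coe_sub]; exact EReal.sub_le_sub h le_rfl

lemma ereal_sub_add_coe' (a : EReal) (b c : ℝ) : a - (b:EReal) + (c:EReal) = a - ((b - c:ℝ):EReal) := by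
  induction a using EReal.rec with
  | bot => rw [EReal.bot_sub, EReal.bot_add, EReal.bot_sub]
  | coe r =>
    rw [← EReal.coe_sub, ← EReal.coe_add, ← EReal.coe_sub]
    exact EReal.coe_eq_coe_iff.mpr (by ring)
  | top => rw [EReal.top_sub_coe, EReal.top_add_coe, EReal.top_sub_coe]

end TWHelpers

set_option maxHeartbeats 2000000 in
/-- a concave traveling wave `g` with speed `v`, support `[L,0]`
and phenotypic threshold `s = sNext γ μ g` satisfies `g(0) = g(L) = 0`,
`sup g = γ`, and `g(x) = Φ_s[g](x + v)` on `[L,0]`. -/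

theorem travelingWave_basic (γ μ : ℝ) (hγ : γ ∈ Set.Ioo (0 : ℝ) 1) (hμ : 0 < μ)
    (g : ℝ → EReal) (v L : ℝ) (hg : IsTravelingWave γ μ g v L) :
    g 0 = 0 ∧ g L = 0 ∧ (⨆ x : ℝ, g x) = (γ : EReal) ∧
    ∀ x ∈ Set.Icc L 0, g x = Phi γ μ g (sNext γ μ g) (x + v) := by
  obtain ⟨hγ0, hγ1⟩ := hγ
  obtain ⟨hconc, hne, hbb, hsup0, hinfL, hout, hTW⟩ := hg
  obtain ⟨x₀, hx₀⟩ := hne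
  simp only [Set.mem_setOf_eq] at hx₀
  set s : ℝ := sNext γ μ g with hs_def
  -- the one-step relation
  have h1 : ∀ x : ℝ, piE (Phi γ μ g s x) = g (x - v) := by
    intro x
    have h := hTW 1 le_rfl x
    rw [Nat.cast_one, one_mul] at h
    simpa [gIter] using h
  -- support facts
  have hPsub : ∀ x : ℝ, 0 < g x → L ≤ x ∧ x ≤ 0 := by
    intro x hx
    by_contra hc
    have hb : g x = ⊥ := hout x (fun hm => hc ⟨hm.1, hm.2⟩)
    rw [hb] at hx
    exact absurd hx (by simp)
  have hgbot : ∀ x : ℝ, x < L ∨ 0 < x → g x = ⊥ := by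
    intro x hx
    refine hout x (fun hm => ?_)
    rcases hx with h | h
    · exact absurd hm.1 (not_le.mpr h)
    · exact absurd hm.2 (not_le.mpr h)
  -- the sup-convolution S
  set S : ℝ → EReal := fun x => ⨆ y : ℝ, g y - ((|x - y| : ℝ) : EReal) with hS_def
  have hPhiS : ∀ ξ x : ℝ, Phi γ μ g ξ x
      = ((1-γ:ℝ):EReal) + S x - ((μ * max (ξ-x) 0 : ℝ):EReal) := fun _ _ => rfl
  have hSlb : ∀ x : ℝ, g x₀ - ((|x - x₀| : ℝ) : EReal) ≤ S x := by
    intro x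
    exact le_iSup (fun y => g y - ((|x - y| : ℝ) : EReal)) x₀
  have hSbot : ∀ x : ℝ, S x ≠ ⊥ := by
    intro x h
    have h2 := hSlb x
    rw [h, le_bot_iff] at h2
    refine ereal_sub_ne_bot' (g x₀) _ ?_ h2
    intro hb
    rw [hb] at hx₀
    exact absurd hx₀ (by simp)
  have hSlip : ∀ x x' : ℝ, S x' - ((|x - x'| : ℝ) : EReal) ≤ S x := by
    intro x x'
    rw [EReal.sub_le_iff_le_add (Or.inl (EReal.coe_ne_bot _)) (Or.inl (EReal.coe_ne_top _))]
    refine iSup_le fun y => ?_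
    have h3 : g y - ((|x' - y| : ℝ) : EReal) ≤ (g y - ((|x - y| : ℝ) : EReal)) + ((|x - x'| : ℝ) : EReal) := by
      rw [ereal_sub_add_coe']
      refine EReal.sub_le_sub le_rfl (EReal.coe_le_coe_iff.mpr ?_)
      have := abs_sub_le x x' y
      linarith
    exact h3.trans (add_le_add (le_iSup (fun y => g y - ((|x - y| : ℝ) : EReal)) y) le_rfl)
  have hStop : ∀ x : ℝ, S x ≠ ⊤ := by
    intro x hx
    have hall : ∀ t : ℝ, S t = ⊤ := by
      intro t
      have h2 := hSlip t x
      rw [hx, EReal.top_sub_coe] at h2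
      exact top_le_iff.mp h2
    have hPhiTop : Phi γ μ g s (1 + v) = ⊤ := by
      rw [hPhiS, hall, EReal.coe_add_top, EReal.top_sub_coe]
    have h3 := h1 (1 + v)
    rw [hPhiTop] at h3
    have h4 : g (1 + v - v) = ⊥ := hgbot _ (Or.inr (by linarith))
    rw [h4] at h3
    unfold piE at h3
    simp at h3
  set Sr : ℝ → ℝ := fun x => (S x).toReal with hSr_def
  have hSr : ∀ x : ℝ, S x = ((Sr x : ℝ) : EReal) := fun x =>
    (EReal.coe_toReal (hStop x) (hSbot x)).symm
  have hSry : ∀ x y : ℝ, g y ≤ ((Sr x + |x - y| : ℝ) : EReal) := by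
    intro x y
    have h2 := le_iSup (fun y => g y - ((|x - y| : ℝ) : EReal)) y
    rw [show (⨆ y : ℝ, g y - ((|x - y| : ℝ) : EReal)) = S x from rfl, hSr x,
      EReal.sub_le_iff_le_add (Or.inl (EReal.coe_ne_bot _)) (Or.inl (EReal.coe_ne_top _))] at h2
    rw [EReal.coe_add]
    exact h2
  set hh : ℝ → ℝ → ℝ := fun ξ x => 1 - γ + Sr x - μ * max (ξ - x) 0 with hh_def
  have hPhi : ∀ ξ x : ℝ, Phi γ μ g ξ x = ((hh ξ x : ℝ) : EReal) := by
    intro ξ x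
    rw [hPhiS, hSr, ← EReal.coe_add, ← EReal.coe_sub]
  have hSrlip : ∀ x x' : ℝ, Sr x' - |x - x'| ≤ Sr x := by
    intro x x'
    have h2 := hSlip x x'
    rw [hSr, hSr, ← EReal.coe_sub, EReal.coe_le_coe_iff] at h2
    exact h2
  have hSrcont : Continuous Sr := by
    refine LipschitzWith.continuous (K := 1) (LipschitzWith.of_dist_le_mul fun x x' => ?_)
    rw [Real.dist_eq, Real.dist_eq, NNReal.coe_one, one_mul, abs_sub_le_iff]
    constructor
    · have := hSrlip x' x
      have h4 := abs_sub_comm x' x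
      linarith
    · have := hSrlip x x'
      linarith
  have hhcont : ∀ ξ : ℝ, Continuous (hh ξ) := by
    intro ξ
    rw [hh_def]
    exact (continuous_const.add hSrcont).sub
      (continuous_const.mul ((continuous_const.sub continuous_id).max continuous_const))
  have h1' : ∀ y : ℝ, piE ((hh s (y+v) : ℝ) : EReal) = g y := by
    intro y
    have h2 := h1 (y + v)
    rw [hPhi s (y+v)] at h2
    rwa [add_sub_cancel_right] at h2
  have hneg : ∀ t : ℝ, v < t → hh s t < 0 := by
    intro t ht
    by_contra hc
    push_neg at hc
    have h2 := h1 t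
    rw [hPhi, piE_coe', if_pos hc, hgbot (t - v) (Or.inr (by linarith))] at h2
    exact EReal.coe_ne_bot _ h2
  have hnegL : ∀ t : ℝ, t < L + v → hh s t < 0 := by
    intro t ht
    by_contra hc
    push_neg at hc
    have h2 := h1 t
    rw [hPhi, piE_coe', if_pos hc, hgbot (t - v) (Or.inl (by linarith))] at h2
    exact EReal.coe_ne_bot _ h2
  have hv_le : hh s v ≤ 0 := by
    refine le_of_tendsto (x := nhdsWithin v (Set.Ioi v))
      (((hhcont s).tendsto v).mono_left nhdsWithin_le_nhds) ?_
    filter_upwards [self_mem_nhdsWithin] with t ht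
    exact (hneg t ht).le
  have hLv_le : hh s (L+v) ≤ 0 := by
    refine le_of_tendsto (x := nhdsWithin (L+v) (Set.Iio (L+v)))
      (((hhcont s).tendsto (L+v)).mono_left nhdsWithin_le_nhds) ?_
    filter_upwards [self_mem_nhdsWithin] with t ht
    exact (hnegL t ht).le
  have hg0le : g 0 ≤ 0 := by
    have h2 := h1' 0
    rw [zero_add, piE_coe'] at h2
    split_ifs at h2 with hif
    · rw [← h2]
      exact EReal.coe_nonpos.mpr hv_le
    · rw [← h2]
      exact bot_le
  have hgLle : g L ≤ 0 := by
    have h2 := h1' L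
    rw [piE_coe'] at h2
    split_ifs at h2 with hif
    · rw [← h2]
      exact EReal.coe_nonpos.mpr hLv_le
    · rw [← h2]
      exact bot_le
  have hL0 : L < 0 := by
    obtain ⟨hl, hr⟩ := hPsub x₀ hx₀
    have h0 : x₀ ≠ 0 := fun h => absurd (h ▸ hx₀) (not_lt.mpr hg0le)
    have hLne : x₀ ≠ L := fun h => absurd (h ▸ hx₀) (not_lt.mpr hgLle)
    rcases eq_or_lt_of_le hl with h | h
    · exact absurd h.symm hLne
    · exact lt_of_lt_of_le h (lt_of_le_of_ne hr h0).le
  have hgpos : ∀ y : ℝ, L < y → y < 0 → 0 < g y := by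
    intro y hy1 hy2
    obtain ⟨b, hb, hyb⟩ := exists_lt_of_lt_csSup ⟨x₀, hx₀⟩ (by rw [hsup0]; exact hy2)
    obtain ⟨a, ha, hay⟩ := exists_lt_of_csInf_lt ⟨x₀, hx₀⟩ (by rw [hinfL]; exact hy1)
    simp only [Set.mem_setOf_eq] at hb ha
    have hba : 0 < b - a := by linarith
    have ht0 : 0 < (y - a) / (b - a) := div_pos (by linarith) hba
    have ht1 : (y - a) / (b - a) < 1 := (div_lt_one hba).mpr (by linarith)
    have hcomb : (y - a) / (b - a) * b + (1 - (y - a) / (b - a)) * a = y := by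
      field_simp
      ring
    have h2 := hconc b a ((y - a) / (b - a)) ht0.le ht1.le
    rw [hcomb] at h2
    refine lt_of_lt_of_le ?_ h2
    have hb' : 0 < (((y - a) / (b - a) : ℝ) : EReal) * g b :=
      EReal.mul_pos (by exact_mod_cast ht0) hb
    have ha' : 0 < ((1 - (y - a) / (b - a) : ℝ) : EReal) * g a :=
      EReal.mul_pos (by exact_mod_cast (by linarith : (0:ℝ) < 1 - (y - a) / (b - a))) ha
    exact lt_of_lt_of_le ha' (le_add_of_nonneg_left hb'.le)
  have hgh : ∀ y : ℝ, L < y → y < 0 → g y = ((hh s (y+v) : ℝ) : EReal) := by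
    intro y hy1 hy2
    have h2 := h1' y
    rw [piE_coe'] at h2
    split_ifs at h2 with hif
    · exact h2.symm
    · have h3 := hgpos y hy1 hy2
      rw [← h2] at h3
      exact absurd h3 (by simp)
  have hv0 : hh s v = 0 := by
    refine le_antisymm hv_le ?_
    have hcl : (nhdsWithin (0:ℝ) (Set.Ioo L 0)).NeBot := by
      refine mem_closure_iff_nhdsWithin_neBot.mp ?_
      rw [closure_Ioo hL0.ne]
      exact Set.right_mem_Icc.mpr hL0.le
    have htend : Filter.Tendsto (fun y : ℝ => hh s (y + v)) (nhdsWithin 0 (Set.Ioo L 0))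
        (nhds (hh s (0 + v))) :=
      (((hhcont s).comp (continuous_add_right v)).tendsto 0).mono_left nhdsWithin_le_nhds
    rw [zero_add] at htend
    refine ge_of_tendsto htend ?_
    filter_upwards [self_mem_nhdsWithin] with y hy
    have h2 := hgpos y hy.1 hy.2
    rw [hgh y hy.1 hy.2] at h2
    exact (EReal.coe_pos.mp h2).le
  have hLv0 : hh s (L+v) = 0 := by
    refine le_antisymm hLv_le ?_
    have hcl : (nhdsWithin (L:ℝ) (Set.Ioo L 0)).NeBot := by
      refine mem_closure_iff_nhdsWithin_neBot.mp ?_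
      rw [closure_Ioo hL0.ne]
      exact Set.left_mem_Icc.mpr hL0.le
    have htend : Filter.Tendsto (fun y : ℝ => hh s (y + v)) (nhdsWithin L (Set.Ioo L 0))
        (nhds (hh s (L + v))) :=
      (((hhcont s).comp (continuous_add_right v)).tendsto L).mono_left nhdsWithin_le_nhds
    refine ge_of_tendsto htend ?_
    filter_upwards [self_mem_nhdsWithin] with y hy
    have h2 := hgpos y hy.1 hy.2
    rw [hgh y hy.1 hy.2] at h2
    exact (EReal.coe_pos.mp h2).le
  have goal1 : g 0 = 0 := by
    have h2 := h1' 0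
    rw [zero_add, hv0, piE_coe', if_pos le_rfl] at h2
    rw [← h2]
    exact EReal.coe_zero
  have goal2 : g L = 0 := by
    have h2 := h1' L
    rw [hLv0, piE_coe', if_pos le_rfl] at h2
    rw [← h2]
    exact EReal.coe_zero
  have goal4 : ∀ x ∈ Set.Icc L 0, g x = Phi γ μ g s (x + v) := by
    rintro x ⟨hx1, hx2⟩
    rw [hPhi]
    rcases eq_or_lt_of_le hx1 with h | h
    · rw [← h, goal2, hLv0, EReal.coe_zero]
    · rcases eq_or_lt_of_le hx2 with h2 | h2
      · rw [h2, goal1, zero_add, hv0, EReal.coe_zero]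
      · exact hgh x h h2
  -- the supremum analysis
  set M : EReal := ⨆ x : ℝ, g x with hM_def
  set C : ℝ := Sr 0 + |L| with hC_def
  have hgleC : ∀ y : ℝ, g y ≤ ((C:ℝ):EReal) := by
    intro y
    by_cases hy : L ≤ y ∧ y ≤ 0
    · refine (hSry 0 y).trans (EReal.coe_le_coe_iff.mpr ?_)
      have habs : |0 - y| ≤ |L| := by
        rw [zero_sub, abs_neg, abs_of_nonpos hy.2, abs_of_nonpos hL0.le]
        linarith [hy.1]
      rw [hC_def]
      linarith
    · rw [hout y (fun hm => hy ⟨hm.1, hm.2⟩)]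
      exact bot_le
  have hMleC : M ≤ ((C:ℝ):EReal) := by
    exact iSup_le hgleC
  have hMpos : 0 < M := by
    exact lt_of_lt_of_le hx₀ (le_iSup g x₀)
  set Mr : ℝ := M.toReal with hMr_def
  have hMr : M = ((Mr:ℝ):EReal) := by
    refine (EReal.coe_toReal ?_ ?_).symm
    · exact fun h => EReal.coe_ne_top C (top_le_iff.mp (h ▸ hMleC))
    · exact fun h => absurd (h ▸ hMpos) (by simp)
  have hMrpos : 0 < Mr := by
    have h2 := hMpos
    rw [hMr] at h2
    exact EReal.coe_pos.mp h2
  have hSrleC : ∀ x : ℝ, Sr x ≤ C := by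
    intro x
    have h2 : S x ≤ ((C:ℝ):EReal) := by
      refine iSup_le fun y => ?_
      refine le_trans ?_ (hgleC y)
      refine le_trans (EReal.sub_le_sub (le_refl (g y))
        (EReal.coe_nonneg.mpr (abs_nonneg (x - y)))) ?_
      simp
    rw [hSr] at h2
    exact EReal.coe_le_coe_iff.mp h2
  have hbddhh : ∀ ξ : ℝ, BddAbove (Set.range (hh ξ)) := by
    intro ξ
    refine ⟨1 - γ + C, ?_⟩
    rintro r ⟨x, rfl⟩
    have h2 := hSrleC x
    have h3 : 0 ≤ μ * max (ξ - x) 0 := mul_nonneg hμ.le (le_max_right _ _)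
    simp only [hh_def]
    linarith
  set Fr : ℝ → ℝ := fun ξ => ⨆ x : ℝ, hh ξ x with hFr_def
  have hFrge : ∀ ξ x : ℝ, hh ξ x ≤ Fr ξ := fun ξ x => le_ciSup (hbddhh ξ) x
  have hFE : ∀ ξ : ℝ, (⨆ x : ℝ, Phi γ μ g ξ x) = ((Fr ξ : ℝ) : EReal) := by
    intro ξ
    have h2 : ((⨆ x : ℝ, hh ξ x : ℝ) : EReal) = ⨆ x : ℝ, ((hh ξ x : ℝ) : EReal) :=
      Monotone.map_ciSup_of_continuousAt (continuous_coe_real_ereal.continuousAt)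
        (EReal.coe_strictMono.monotone) (hbddhh ξ)
    rw [show (⨆ x : ℝ, Phi γ μ g ξ x) = ⨆ x : ℝ, ((hh ξ x : ℝ) : EReal) from iSup_congr (hPhi ξ)]
    exact h2.symm
  have hT : {ξ : ℝ | (γ:EReal) ≤ ⨆ x : ℝ, Phi γ μ g ξ x} = {ξ : ℝ | γ ≤ Fr ξ} := by
    ext ξ
    rw [Set.mem_setOf_eq, Set.mem_setOf_eq, hFE ξ, EReal.coe_le_coe_iff]
  have hsT : s = sSup {ξ : ℝ | γ ≤ Fr ξ} := by
    rw [hs_def]; unfold sNext; rw [hT]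
  have hFrlip : ∀ ξ ξ' : ℝ, Fr ξ ≤ Fr ξ' + μ * |ξ - ξ'| := by
    intro ξ ξ'
    refine ciSup_le fun x => ?_
    have habs := abs_max_sub_max_le_abs (ξ' - x) (ξ - x) 0
    rw [show (ξ' - x) - (ξ - x) = ξ' - ξ by ring] at habs
    have h3 : max (ξ' - x) 0 - max (ξ - x) 0 ≤ |ξ - ξ'| := by
      have h4 := le_abs_self (max (ξ' - x) 0 - max (ξ - x) 0)
      have h5 := abs_sub_comm ξ' ξ
      simp only [max_def] at habs h4 ⊢
      split_ifs at habs h4 ⊢ <;> linarith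
    have h2 := hFrge ξ' x
    simp only [hh_def] at h2 ⊢
    nlinarith [mul_le_mul_of_nonneg_left h3 hμ.le]
  have hFranti : ∀ ξ ξ' : ℝ, ξ ≤ ξ' → Fr ξ' ≤ Fr ξ := by
    intro ξ ξ' hle
    refine ciSup_le fun x => le_trans ?_ (hFrge ξ x)
    simp only [hh_def]
    have h2 : max (ξ - x) 0 ≤ max (ξ' - x) 0 := max_le_max (by linarith) le_rfl
    nlinarith [mul_le_mul_of_nonneg_left h2 hμ.le]
  have hFrspos : 0 < Fr s := by
    have h2 := hgpos (L/2) (by linarith) (by linarith)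
    rw [hgh (L/2) (by linarith) (by linarith)] at h2
    exact lt_of_lt_of_le (EReal.coe_pos.mp h2) (hFrge s (L/2 + v))
  have hMFr : Mr = Fr s := by
    have hle1 : M ≤ ((Fr s:ℝ):EReal) := by
      refine iSup_le fun x => ?_
      rw [← h1' x]
      exact le_trans (piE_le' _) (EReal.coe_le_coe_iff.mpr (hFrge s (x + v)))
    have hle2 : Fr s ≤ Mr := by
      refine le_of_forall_pos_le_add fun ε hε => ?_
      have hε'pos : 0 < min ε (Fr s) := lt_min hε hFrspos
      have hlt : Fr s - min ε (Fr s) < Fr s := by linarith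
      rw [hFr_def] at hlt
      obtain ⟨x, hx⟩ := exists_lt_of_lt_ciSup hlt
      have hxnn : 0 ≤ hh s x := by
        have := min_le_right ε (Fr s)
        linarith
      have h2 := h1 x
      rw [hPhi, piE_coe', if_pos hxnn] at h2
      have h3 : ((hh s x:ℝ):EReal) ≤ ((Mr:ℝ):EReal) := by
        rw [h2, ← hMr]
        exact le_iSup g (x - v)
      have h4 := EReal.coe_le_coe_iff.mp h3
      have h5 := min_le_left ε (Fr s)
      linarith
    rw [hMr] at hle1
    exact le_antisymm (EReal.coe_le_coe_iff.mp hle1) hle2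
  have hSrle0 : ∀ x : ℝ, 0 ≤ x → Sr x ≤ Mr - x := by
    intro x hx
    have h2 : S x ≤ ((Mr - x:ℝ):EReal) := by
      refine iSup_le fun y => ?_
      by_cases hy : L ≤ y ∧ y ≤ 0
      · have hgy : g y ≤ ((Mr:ℝ):EReal) := hMr ▸ le_iSup g y
        have habs : (x:ℝ) ≤ |x - y| := by
          rw [abs_of_nonneg (by linarith [hy.2] : (0:ℝ) ≤ x - y)]
          linarith [hy.2]
        refine le_trans (EReal.sub_le_sub hgy (EReal.coe_le_coe_iff.mpr habs)) ?_
        rw [← EReal.coe_sub]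
      · rw [hout y (fun hm => hy ⟨hm.1, hm.2⟩), EReal.bot_sub]
        exact bot_le
    rw [hSr] at h2
    exact EReal.coe_le_coe_iff.mp h2
  have hSrshift : ∀ x x' : ℝ, 0 ≤ x → x ≤ x' → Sr x = Sr x' + (x' - x) := by
    intro x x' hx hxx'
    have h1le : Sr x' + (x' - x) ≤ Sr x := by
      have h2 : S x' ≤ ((Sr x - (x' - x):ℝ):EReal) := by
        refine iSup_le fun y => ?_
        by_cases hy : L ≤ y ∧ y ≤ 0
        · have habs : Sr x + |x - y| - |x' - y| = Sr x - (x' - x) := by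
            rw [abs_of_nonneg (by linarith [hy.2] : (0:ℝ) ≤ x' - y),
              abs_of_nonneg (by linarith [hy.2] : (0:ℝ) ≤ x - y)]
            ring
          refine le_trans (ereal_sub_coe_le' _ _ _ (hSry x y)) ?_
          rw [habs]
        · rw [hout y (fun hm => hy ⟨hm.1, hm.2⟩), EReal.bot_sub]
          exact bot_le
      rw [hSr] at h2
      have h3 := EReal.coe_le_coe_iff.mp h2
      linarith
    have h2le : Sr x ≤ Sr x' + (x' - x) := by
      have h2 : S x ≤ ((Sr x' + (x' - x):ℝ):EReal) := by
        refine iSup_le fun y => ?_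
        by_cases hy : L ≤ y ∧ y ≤ 0
        · have habs : Sr x' + |x' - y| - |x - y| = Sr x' + (x' - x) := by
            rw [abs_of_nonneg (by linarith [hy.2] : (0:ℝ) ≤ x' - y),
              abs_of_nonneg (by linarith [hy.2] : (0:ℝ) ≤ x - y)]
            ring
          refine le_trans (ereal_sub_coe_le' _ _ _ (hSry x' y)) ?_
          rw [habs]
        · rw [hout y (fun hm => hy ⟨hm.1, hm.2⟩), EReal.bot_sub]
          exact bot_le
      rw [hSr] at h2
      exact EReal.coe_le_coe_iff.mp h2
    exact le_antisymm h2le h1le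
  have hTbdd : BddAbove {ξ : ℝ | γ ≤ Fr ξ} := by
    set K : ℝ := max (1 - γ + C) (1 - γ + Mr) with hK
    set m : ℝ := min 1 μ with hm
    have hmpos : 0 < m := lt_min one_pos hμ
    set ξ₀ : ℝ := max 1 (2 * (K - γ + 1) / m) with hξ₀
    have hξ₀pos : (0:ℝ) < ξ₀ := lt_of_lt_of_le one_pos (le_max_left _ _)
    have hbound : ∀ x : ℝ, hh ξ₀ x ≤ K - m * ξ₀ / 2 := by
      intro x
      rcases le_or_gt x (ξ₀/2) with hx | hx
      · have hA : ξ₀/2 ≤ max (ξ₀ - x) 0 := le_trans (by linarith) (le_max_left _ _)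
        have hB : μ * (ξ₀/2) ≤ μ * max (ξ₀ - x) 0 := mul_le_mul_of_nonneg_left hA hμ.le
        have hC2 : m * (ξ₀/2) ≤ μ * (ξ₀/2) :=
          mul_le_mul_of_nonneg_right (min_le_right 1 μ) (by linarith)
        have h2 := hSrleC x
        have hK1 : 1 - γ + C ≤ K := le_max_left _ _
        simp only [hh_def]
        linarith
      · have h2 := hSrle0 x (by linarith)
        have hpen : 0 ≤ μ * max (ξ₀ - x) 0 := mul_nonneg hμ.le (le_max_right _ _)
        have hK2 : 1 - γ + Mr ≤ K := le_max_right _ _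
        have hmle : m * (ξ₀/2) ≤ 1 * (ξ₀/2) :=
          mul_le_mul_of_nonneg_right (min_le_left 1 μ) (by linarith)
        simp only [hh_def]
        linarith
    have hFrξ : Fr ξ₀ ≤ γ - 1 := by
      refine ciSup_le fun x => (hbound x).trans ?_
      have h2 : 2 * (K - γ + 1) / m ≤ ξ₀ := le_max_right _ _
      have h3 := (div_le_iff₀ hmpos).mp h2
      nlinarith
    by_contra hnb
    obtain ⟨ξ', hξ'T, hξ'gt⟩ := not_bddAbove_iff.mp hnb ξ₀
    have h4 := le_trans (hξ'T : γ ≤ Fr ξ') (hFranti ξ₀ ξ' hξ'gt.le)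
    linarith
  have hTne : {ξ : ℝ | γ ≤ Fr ξ}.Nonempty := by
    by_contra hTe
    rw [Set.not_nonempty_iff_eq_empty] at hTe
    have hs0 : s = 0 := by rw [hsT, hTe, Real.sSup_empty]
    have hFrlt : ∀ ξ : ℝ, Fr ξ < γ := by
      intro ξ
      by_contra hc
      push_neg at hc
      have hmem : ξ ∈ {ξ : ℝ | γ ≤ Fr ξ} := hc
      rw [hTe] at hmem
      exact hmem
    have hSr0ge : 0 ≤ Sr 0 := by
      have hcl : (nhdsWithin (0:ℝ) (Set.Ioo L 0)).NeBot := by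
        refine mem_closure_iff_nhdsWithin_neBot.mp ?_
        rw [closure_Ioo hL0.ne]
        exact Set.right_mem_Icc.mpr hL0.le
      have htend : Filter.Tendsto (fun y : ℝ => hh s (y + v) - |y|) (nhdsWithin 0 (Set.Ioo L 0))
          (nhds (hh s (0 + v) - |(0:ℝ)|)) :=
        ((((hhcont s).comp (continuous_add_right v)).sub continuous_abs).tendsto 0).mono_left
          nhdsWithin_le_nhds
      rw [zero_add, abs_zero, sub_zero, hv0] at htend
      refine le_of_tendsto htend ?_
      filter_upwards [self_mem_nhdsWithin] with y hy
      have hle := le_iSup (fun y' => g y' - ((|0 - y'| : ℝ) : EReal)) y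
      rw [show (⨆ y' : ℝ, g y' - ((|0 - y'| : ℝ) : EReal)) = S 0 from rfl, hSr 0,
        hgh y hy.1 hy.2, ← EReal.coe_sub, EReal.coe_le_coe_iff] at hle
      rw [zero_sub, abs_neg] at hle
      linarith
    rcases eq_or_ne v 0 with hveq | hv
    · have h2 := hv0
      simp only [hh_def] at h2
      rw [hs0, hveq, show ((0:ℝ) - 0) = 0 by ring, max_self, mul_zero] at h2
      linarith
    · rcases lt_or_ge (L + v) 0 with hLv | hLv
      · -- speed nonzero, penalty active near the left edge: compare steps 1 and 2
        have hg1fun : gIter γ μ g 1 = fun x => g (x - v) := by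
          funext x
          have h2 := hTW 1 le_rfl x
          rw [Nat.cast_one, one_mul] at h2
          exact h2
        have hS1 : ∀ x : ℝ, (⨆ y : ℝ, g (y - v) - ((|x - y| : ℝ) : EReal)) = S (x - v) := by
          intro x
          have hrfl : S (x - v) = ⨆ y : ℝ, g y - ((|x - v - y| : ℝ) : EReal) := rfl
          rw [hrfl]
          refine le_antisymm (iSup_le fun y => ?_) (iSup_le fun y => ?_)
          · refine le_iSup_of_le (y - v) ?_
            rw [show x - v - (y - v) = x - y by ring]
          · refine le_iSup_of_le (y + v) ?_
            rw [show x - (y + v) = x - v - y by ring, show y + v - v = y by ring]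
        have hPhi1 : ∀ ξ x : ℝ,
            Phi γ μ (fun x => g (x - v)) ξ x
              = ((1 - γ + Sr (x - v) - μ * max (ξ - x) 0 : ℝ) : EReal) := by
          intro ξ x
          simp only [Phi]
          rw [hS1 x, hSr, ← EReal.coe_add, ← EReal.coe_sub]
        have hF1 : ∀ ξ : ℝ,
            (⨆ x : ℝ, Phi γ μ (fun x => g (x - v)) ξ x) = ((Fr (ξ - v) : ℝ) : EReal) := by
          intro ξ
          rw [← hFE (ξ - v)]
          refine le_antisymm (iSup_le fun x => ?_) (iSup_le fun x => ?_)
          · refine le_iSup_of_le (x - v) ?_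
            rw [hPhi1, hPhi (ξ - v) (x - v)]
            simp only [hh_def]
            rw [show ξ - v - (x - v) = ξ - x by ring]
          · refine le_iSup_of_le (x + v) ?_
            rw [hPhi (ξ - v) x, hPhi1]
            simp only [hh_def]
            rw [show x + v - v = x by ring, show ξ - (x + v) = ξ - v - x by ring]
        have hs2 : sNext γ μ (fun x => g (x - v)) = 0 := by
          unfold sNext
          have hempty : {ξ : ℝ | (γ:EReal) ≤ ⨆ x : ℝ, Phi γ μ (fun x => g (x - v)) ξ x} = ∅ := by
            ext ξ
            simp only [Set.mem_setOf_eq, Set.mem_empty_iff_false, iff_false, not_le, hF1 ξ]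
            exact_mod_cast hFrlt (ξ - v)
          rw [hempty, Real.sSup_empty]
        have h2step : ∀ x : ℝ, piE (Phi γ μ (fun x => g (x - v)) 0 x) = g (x - 2*v) := by
          intro x
          have h2 := hTW 2 (by norm_num) x
          rw [show ((2:ℕ):ℝ) = 2 by norm_num] at h2
          have hgiter2 : gIter γ μ g 2
              = fun x => piE (Phi γ μ (gIter γ μ g 1) (sNext γ μ (gIter γ μ g 1)) x) := by
            rw [show (2:ℕ) = 1 + 1 from rfl, gIter.eq_2]
          rw [hgiter2] at h2
          simp only [hg1fun, hs2] at h2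
          exact h2
        set y : ℝ := if 0 < v then (L - v)/2 else L/2 with hy_def
        have hyL : L < y := by
          rw [hy_def]; split_ifs with h
          · linarith
          · linarith
        have hy0 : y < 0 := by
          rw [hy_def]; split_ifs with h
          · linarith
          · linarith
        have hyv : y + v < 0 := by
          rcases hv.lt_or_gt with h | h
          · rw [hy_def, if_neg (not_lt.mpr h.le)]; linarith
          · rw [hy_def, if_pos h]; linarith
        have e1 : g y = ((1 - γ + Sr (y + v) - μ * max (0 - (y+v)) 0 : ℝ):EReal) := by
          rw [hgh y hyL hy0]
          simp only [hh_def]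
          rw [hs0]
        have h2 := h2step (y + 2*v)
        rw [show y + 2*v - 2*v = y by ring, hPhi1, show y + 2*v - v = y + v by ring,
          piE_coe'] at h2
        split_ifs at h2 with hif
        · rw [e1] at h2
          have h4 := EReal.coe_eq_coe_iff.mp h2
          have h5 : max (0 - (y + 2*v)) 0 = max (0 - (y+v)) 0 :=
            mul_left_cancel₀ hμ.ne'
              (by linarith : μ * max (0 - (y + 2*v)) 0 = μ * max (0 - (y+v)) 0)
          rw [max_eq_left (by linarith : (0:ℝ) ≤ 0 - (y+v))] at h5
          rcases le_or_gt (0 - (y + 2*v)) 0 with hcs | hcs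
          · rw [max_eq_right hcs] at h5
            linarith
          · rw [max_eq_left hcs.le] at h5
            exact hv (by linarith)
        · have h3 := hgpos y hyL hy0
          rw [← h2] at h3
          exact absurd h3 (by simp)
      · -- L + v ≥ 0 : then the profile would be affine of slope -1 near the edge
        have hvpos : 0 < v := by
          rcases hv.lt_or_gt with h | h
          · linarith
          · exact h
        have hSrv : Sr v = γ - 1 := by
          have h2 := hv0
          simp only [hh_def] at h2
          rw [hs0, max_eq_right (by linarith : (0:ℝ) - v ≤ 0), mul_zero] at h2
          linarith
        have hshift := hSrshift (L+v) v hLv (by linarith)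
        have h2 := hLv_le
        simp only [hh_def] at h2
        rw [hs0, max_eq_right (by linarith : (0:ℝ) - (L+v) ≤ 0), mul_zero] at h2
        linarith
  have hFrs : Fr s = γ := by
    have hγle : γ ≤ Fr s := by
      refine le_of_forall_pos_le_add fun ε hε => ?_
      have hεμ : 0 < ε/μ := div_pos hε hμ
      obtain ⟨ξ, hξT, hξgt⟩ := exists_lt_of_lt_csSup hTne
        (show s - ε/μ < sSup {ξ : ℝ | γ ≤ Fr ξ} by rw [← hsT]; linarith)
      have hξle : ξ ≤ s := hsT ▸ le_csSup hTbdd hξT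
      have h2 := hFrlip ξ s
      rw [abs_of_nonpos (by linarith : ξ - s ≤ 0)] at h2
      have h3 : μ * (-(ξ - s)) ≤ μ * (ε/μ) := mul_le_mul_of_nonneg_left (by linarith) hμ.le
      rw [mul_div_cancel₀ _ hμ.ne'] at h3
      have hT2 : γ ≤ Fr ξ := hξT
      linarith
    have hγge : Fr s ≤ γ := by
      refine le_of_forall_pos_le_add fun ε hε => ?_
      have hεμ : 0 < ε/μ := div_pos hε hμ
      have hnot : s + ε/μ ∉ {ξ : ℝ | γ ≤ Fr ξ} := by
        intro hmem
        have h2 := le_csSup hTbdd hmem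
        rw [← hsT] at h2
        linarith
      have hlt : Fr (s + ε/μ) < γ := not_le.mp hnot
      have h2 := hFrlip s (s + ε/μ)
      rw [show s - (s + ε/μ) = -(ε/μ) by ring, abs_neg, abs_of_nonneg hεμ.le,
        mul_div_cancel₀ _ hμ.ne'] at h2
      linarith
    exact le_antisymm hγge hγle
  refine ⟨goal1, goal2, ?_, goal4⟩
  rw [hMr, hMFr, hFrs]
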